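/- Let X ~ MLFD(λ, α, β) with λ, α, β > 0. Then E[(αX + β − α)_α] = λ + (β − α)_α · P(X = 0) whenever β > α, where (y)_α = Γ(y+α)/Γ(y) denotes the rising factorial. -/

import Mathlib

open Real

noncomputable def mittagLeffler (α β z : ℝ) : ℝ :=
  ∑' k : ℕ, z ^ k / Real.Gamma (α * k + β)

/-- The pmf of the Mittag-Leffler function distribution MLFD(λ, α, β). -/
noncomputable def mlfdPmf (lam α β : ℝ) (k : ℕ) : ℝ :=
  lam ^ k / (Real.Gamma (α * k + β) * mittagLeffler α β lam)

lemma gamma_lower_aux (j : ℕ) (x : ℝ) (hx : (j : ℝ) + 2 ≤ x) :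
    ((j : ℝ) + 1) ^ (x - 2 - j) ≤ Real.Gamma x := by
  have hj0 : (0:ℝ) ≤ (j:ℝ) := Nat.cast_nonneg j
  have hx2 : (2:ℝ) ≤ x := by linarith
  have hx0 : (0:ℝ) ≤ x := by linarith
  set m := ⌊x⌋₊ with hm
  clear_value m
  have hm2 : j + 2 ≤ m := hm ▸ Nat.le_floor (by exact_mod_cast hx)
  have hmx : (m:ℝ) ≤ x := hm ▸ Nat.floor_le hx0
  have hxm : x < m + 1 := hm ▸ Nat.lt_floor_add_one x
  have h1 : Real.Gamma (m:ℝ) ≤ Real.Gamma x := by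
    apply Real.Gamma_strictMonoOn_Ici.monotoneOn ?_ ?_ hmx
    · have : (2:ℝ) ≤ (m:ℝ) := by exact_mod_cast (by omega : 2 ≤ m)
      exact this
    · exact hx2
  obtain ⟨n, rfl⟩ : ∃ n, m = n + 1 := ⟨m - 1, by omega⟩
  have hjn : j ≤ n := by omega
  have h3 : (j+1)^(n - j) ≤ Nat.factorial n := by
    calc (j+1)^(n-j) ≤ Nat.factorial j * (j+1)^(n-j) :=
          Nat.le_mul_of_pos_left _ (Nat.factorial_pos j)
    _ ≤ Nat.factorial (j + (n - j)) := Nat.factorial_mul_pow_le_factorial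
    _ = Nat.factorial n := by rw [Nat.add_sub_cancel' hjn]
  have hb1 : (1:ℝ) ≤ (j:ℝ)+1 := by linarith
  have h4 : ((j:ℝ)+1) ^ (x - 2 - j) ≤ ((j:ℝ)+1) ^ (((n - j : ℕ)):ℝ) := by
    apply Real.rpow_le_rpow_of_exponent_le hb1
    have hcast : (((n - j : ℕ)):ℝ) = (n:ℝ) - j := by
      rw [Nat.cast_sub hjn]
    rw [hcast]
    have hxn : x < (n:ℝ) + 2 := by push_cast at hxm ⊢; linarith
    linarith
  calc ((j:ℝ)+1) ^ (x - 2 - j) ≤ ((j:ℝ)+1) ^ (((n - j : ℕ)):ℝ) := h4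
    _ = ((j:ℝ)+1) ^ (n - j : ℕ) := Real.rpow_natCast _ _
    _ ≤ (Nat.factorial n : ℝ) := by exact_mod_cast h3
    _ = Real.Gamma ((n:ℝ) + 1) := (Real.Gamma_nat_eq_factorial n).symm
    _ ≤ Real.Gamma x := by push_cast at h1 ⊢; linarith

lemma summable_mlfd_aux (lam α b : ℝ) (hlam : 0 < lam) (hα : 0 < α) (hb : 0 < b) :
    Summable (fun k : ℕ => lam ^ k / Real.Gamma (α * k + b)) := by
  obtain ⟨j, hj⟩ : ∃ j : ℕ, 2 * lam ≤ ((j:ℝ)+1) ^ α := by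
    obtain ⟨j, hj⟩ := exists_nat_ge ((2*lam) ^ (1/α))
    refine ⟨j, ?_⟩
    have h0 : (0:ℝ) ≤ 2*lam := by linarith
    calc 2*lam = ((2*lam) ^ (1/α)) ^ α := by
          rw [← Real.rpow_mul h0, one_div, inv_mul_cancel₀ hα.ne', Real.rpow_one]
      _ ≤ ((j:ℝ)+1) ^ α :=
          Real.rpow_le_rpow (Real.rpow_nonneg h0 _) (by linarith) hα.le
  obtain ⟨K, hK⟩ : ∃ K : ℕ, (j:ℝ) + 2 ≤ α * K + b := by
    obtain ⟨K, hK⟩ := exists_nat_ge (((j:ℝ)+2)/α)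
    refine ⟨K, ?_⟩
    rw [div_le_iff₀ hα] at hK
    nlinarith
  rw [← summable_nat_add_iff K]
  set C := ((j:ℝ)+1) ^ (b - 2 - (j:ℝ)) with hC
  have hCpos : 0 < C := Real.rpow_pos_of_pos (by positivity) _
  have hgsum : Summable (fun k : ℕ => C⁻¹ * ((1:ℝ)/2) ^ k) :=
    (summable_geometric_of_lt_one (by norm_num) (by norm_num)).mul_left _
  apply Summable.of_nonneg_of_le ?_ ?_ hgsum
  · intro k
    have hΓ : 0 < Real.Gamma (α * (k + K : ℕ) + b) :=
      Real.Gamma_pos_of_pos (by positivity)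
    positivity
  · intro k
    set n : ℕ := k + K with hn
    have hx : (j : ℝ) + 2 ≤ α * (n:ℝ) + b := by
      have hKn : (K:ℝ) ≤ (n:ℝ) := by exact_mod_cast (by omega : K ≤ n)
      nlinarith
    have hΓlb : C * (2*lam) ^ n ≤ Real.Gamma (α * (n:ℝ) + b) := by
      have h1 := gamma_lower_aux j (α * (n:ℝ) + b) hx
      have h2 : ((j:ℝ)+1) ^ (α * (n:ℝ) + b - 2 - (j:ℝ))
          = C * (((j:ℝ)+1) ^ α) ^ n := by
        rw [hC, ← Real.rpow_natCast (((j:ℝ)+1) ^ α) n, ← Real.rpow_mul (by positivity),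
          ← Real.rpow_add (by positivity)]
        ring_nf
      have h3 : (2*lam) ^ n ≤ (((j:ℝ)+1) ^ α) ^ n :=
        pow_le_pow_left₀ (by linarith) hj n
      calc C * (2*lam) ^ n ≤ C * (((j:ℝ)+1) ^ α) ^ n := by
            exact mul_le_mul_of_nonneg_left h3 hCpos.le
        _ = ((j:ℝ)+1) ^ (α * (n:ℝ) + b - 2 - (j:ℝ)) := h2.symm
        _ ≤ Real.Gamma (α * (n:ℝ) + b) := h1
    have hΓpos : 0 < Real.Gamma (α * (n:ℝ) + b) :=
      Real.Gamma_pos_of_pos (by positivity)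
    have hcast : α * ((k:ℝ) + (K:ℝ)) + b = α * (n:ℝ) + b := by
      rw [hn]; push_cast; ring
    have step1 : lam ^ n / Real.Gamma (α * (n:ℝ) + b) ≤ lam ^ n / (C * (2*lam) ^ n) := by
      apply div_le_div_of_nonneg_left (by positivity) (by positivity) hΓlb
    have step2 : lam ^ n / (C * (2*lam) ^ n) = C⁻¹ * ((1:ℝ)/2) ^ n := by
      rw [mul_pow]
      field_simp
      rw [← mul_pow]; norm_num
    have step3 : C⁻¹ * ((1:ℝ)/2) ^ n ≤ C⁻¹ * ((1:ℝ)/2) ^ k := by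
      apply mul_le_mul_of_nonneg_left _ (by positivity)
      apply pow_le_pow_of_le_one (by norm_num) (by norm_num)
      omega
    calc lam ^ n / Real.Gamma (α * (n:ℝ) + b)
        ≤ lam ^ n / (C * (2*lam) ^ n) := step1
      _ = C⁻¹ * ((1:ℝ)/2) ^ n := step2
      _ ≤ C⁻¹ * ((1:ℝ)/2) ^ k := step3

/-- `E[(αX+β−α)_α] = λ + (β−α)_α P(X=0)` for `β > α`, where `(y)_α = Γ(y+α)/Γ(y)`. -/
theorem mlfd_factorial_moment_identity (lam α β : ℝ) (hlam : 0 < lam) (hα : 0 < α)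
    (hβα : α < β) :
    ∑' k : ℕ, (Real.Gamma (α * k + β - α + α) / Real.Gamma (α * k + β - α)) *
        mlfdPmf lam α β k
      = lam + (Real.Gamma (β - α + α) / Real.Gamma (β - α)) * mlfdPmf lam α β 0 := by
  have hβ : 0 < β := hα.trans hβα
  have hβα' : 0 < β - α := sub_pos.mpr hβα
  set E := mittagLeffler α β lam with hE
  have hsum1 : Summable (fun k : ℕ => lam ^ k / Real.Gamma (α * k + β)) :=
    summable_mlfd_aux lam α β hlam hα hβ
  have hsum2 : Summable (fun k : ℕ => lam ^ k / Real.Gamma (α * k + (β - α))) :=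
    summable_mlfd_aux lam α (β - α) hlam hα hβα'
  have hEpos : 0 < E := by
    rw [hE, mittagLeffler]
    refine Summable.tsum_pos hsum1 (fun k => ?_) 0 ?_
    · have hΓ : 0 < Real.Gamma (α * k + β) := Real.Gamma_pos_of_pos (by positivity)
      positivity
    · have hΓ : 0 < Real.Gamma (α * (0:ℕ) + β) := Real.Gamma_pos_of_pos (by positivity)
      positivity
  have hpmf_sum : ∑' k, mlfdPmf lam α β k = 1 := by
    unfold mlfdPmf
    simp_rw [← div_div]
    rw [tsum_div_const]
    exact div_self hEpos.ne'
  have key : ∀ k : ℕ, Real.Gamma (α * k + β - α + α) / Real.Gamma (α * k + β - α) *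
      mlfdPmf lam α β k = lam ^ k / (Real.Gamma (α * k + (β - α)) * E) := by
    intro k
    have h1 : α * k + β - α + α = α * k + β := by ring
    have h2 : α * k + β - α = α * k + (β - α) := by ring
    have hΓ1 : 0 < Real.Gamma (α * k + β) := Real.Gamma_pos_of_pos (by positivity)
    have hΓ2 : 0 < Real.Gamma (α * k + (β - α)) := Real.Gamma_pos_of_pos (by positivity)
    rw [h1, h2, mlfdPmf, ← hE]
    field_simp
  have hsumF : Summable (fun k : ℕ =>
      Real.Gamma (α * k + β - α + α) / Real.Gamma (α * k + β - α) * mlfdPmf lam α β k) := by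
    apply Summable.congr (hsum2.div_const E)
    intro k
    rw [key k, div_div]
  rw [Summable.tsum_eq_zero_add hsumF]
  have htail : ∀ k : ℕ, Real.Gamma (α * ((k:ℕ)+1 : ℕ) + β - α + α) /
      Real.Gamma (α * ((k:ℕ)+1 : ℕ) + β - α) * mlfdPmf lam α β (k+1)
      = lam * mlfdPmf lam α β k := by
    intro k
    rw [key (k+1)]
    have h3 : α * ((k:ℕ)+1 : ℕ) + (β - α) = α * k + β := by push_cast; ring
    rw [h3, mlfdPmf, ← hE, pow_succ]
    ring
  simp only [htail]
  rw [tsum_mul_left, hpmf_sum, mul_one]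
  norm_num [add_comm]
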